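/- arXiv:2212.14748 — 7 statements merged into one kernel-verified Lean document; each statement's English description precedes it below -/
import Mathlib

section
/- For every real r with 0 < r < 1 there is a constant C(r) such that for all N ≥ 2, |N Σ_{j=1}^{N-1} r^j/(N-j) - r/(1-r)| ≤ C(r)/N. -/
open Real Finset

theorem sum_pow_div_sub_lt_one (r : ℝ) (hr0 : 0 < r) (hr1 : r < 1) :
    ∃ C : ℝ, ∀ N : ℕ, 2 ≤ N →
      |(N : ℝ) * (∑ j ∈ Finset.Icc 1 (N - 1), r ^ j / ((N : ℝ) - j)) - r / (1 - r)|
        ≤ C / N := by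
  have h1r : 0 < 1 - r := by linarith
  have hrabs : ‖r‖ < 1 := by rw [Real.norm_eq_abs, abs_of_pos hr0]; exact hr1
  have hs1 : Summable (fun n : ℕ => (n : ℝ) * r ^ n) := by
    simpa using summable_pow_mul_geometric_of_norm_lt_one 1 hrabs
  have hs2 : Summable (fun n : ℕ => (n : ℝ) ^ 2 * r ^ n) :=
    summable_pow_mul_geometric_of_norm_lt_one 2 hrabs
  have hsf : Summable (fun n : ℕ => ((n : ℝ) + (n : ℝ) ^ 2) * r ^ n) := by
    simpa [add_mul] using hs1.add hs2
  have hfnn : ∀ n : ℕ, 0 ≤ ((n : ℝ) + (n : ℝ) ^ 2) * r ^ n := fun n =>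
    mul_nonneg (by positivity) (pow_nonneg hr0.le n)
  set T := ∑' n : ℕ, ((n : ℝ) + (n : ℝ) ^ 2) * r ^ n with hT
  have hTnn : 0 ≤ T := tsum_nonneg hfnn
  refine ⟨T * (1 + (1 - r)⁻¹), fun N hN => ?_⟩
  have hN0 : (0 : ℝ) < N := by
    have : 0 < N := by omega
    exact_mod_cast this
  -- facts about j in the index set
  have hjfact : ∀ j ∈ Finset.Icc 1 (N - 1), (1 : ℝ) ≤ (j : ℝ) ∧ (j : ℝ) + 1 ≤ (N : ℝ) := by
    intro j hj
    have h := Finset.mem_Icc.mp hj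
    constructor
    · exact_mod_cast h.1
    · have : j + 1 ≤ N := by omega
      exact_mod_cast this
  -- Step A: split the sum
  have hA : (N : ℝ) * (∑ j ∈ Finset.Icc 1 (N - 1), r ^ j / ((N : ℝ) - j))
      = (∑ j ∈ Finset.Icc 1 (N - 1), r ^ j)
        + ∑ j ∈ Finset.Icc 1 (N - 1), (j : ℝ) * r ^ j / ((N : ℝ) - j) := by
    rw [Finset.mul_sum, ← Finset.sum_add_distrib]
    refine Finset.sum_congr rfl fun j hj => ?_
    obtain ⟨hj1, hj2⟩ := hjfact j hj
    have hne : (N : ℝ) - j ≠ 0 := by linarith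
    field_simp
    ring
  -- Step B: geometric sum
  have hB : (∑ j ∈ Finset.Icc 1 (N - 1), r ^ j) = r / (1 - r) - r ^ N / (1 - r) := by
    have hIcc : Finset.Icc 1 (N - 1) = Finset.Ico 1 N := by
      rw [← Finset.Ico_add_one_right_eq_Icc]
      congr 1
      omega
    have h0 : ∑ j ∈ Finset.range N, r ^ j = (r ^ N - 1) / (r - 1) :=
      geom_sum_eq (by linarith) N
    have h1 : ∑ j ∈ Finset.range N, r ^ j
        = r ^ 0 + ∑ j ∈ Finset.Icc 1 (N - 1), r ^ j := by
      rw [hIcc, Finset.range_eq_Ico, Finset.sum_eq_sum_Ico_succ_bot (by omega)]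
    rw [h0] at h1
    have hne : r - 1 ≠ 0 := by linarith
    have hne2 : (1 : ℝ) - r ≠ 0 := by linarith
    field_simp at h1 ⊢
    linarith [h1]
  rw [hA, hB]
  have hrw : r / (1 - r) - r ^ N / (1 - r)
      + (∑ j ∈ Finset.Icc 1 (N - 1), (j : ℝ) * r ^ j / ((N : ℝ) - j)) - r / (1 - r)
      = (∑ j ∈ Finset.Icc 1 (N - 1), (j : ℝ) * r ^ j / ((N : ℝ) - j))
        - r ^ N / (1 - r) := by ring
  rw [hrw]
  have hsum_nn : 0 ≤ ∑ j ∈ Finset.Icc 1 (N - 1), (j : ℝ) * r ^ j / ((N : ℝ) - j) := by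
    refine Finset.sum_nonneg fun j hj => ?_
    obtain ⟨hj1, hj2⟩ := hjfact j hj
    have : (0 : ℝ) < (N : ℝ) - j := by linarith
    positivity
  have ht_nn : 0 ≤ r ^ N / (1 - r) := by positivity
  have habs : |(∑ j ∈ Finset.Icc 1 (N - 1), (j : ℝ) * r ^ j / ((N : ℝ) - j))
      - r ^ N / (1 - r)|
      ≤ (∑ j ∈ Finset.Icc 1 (N - 1), (j : ℝ) * r ^ j / ((N : ℝ) - j))
        + r ^ N / (1 - r) := by
    calc _ ≤ |∑ j ∈ Finset.Icc 1 (N - 1), (j : ℝ) * r ^ j / ((N : ℝ) - j)|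
            + |r ^ N / (1 - r)| := abs_sub _ _
    _ = _ := by rw [abs_of_nonneg hsum_nn, abs_of_nonneg ht_nn]
  refine habs.trans ?_
  rw [le_div_iff₀ hN0, add_mul]
  -- bound the first part
  have hb1 : (∑ j ∈ Finset.Icc 1 (N - 1), (j : ℝ) * r ^ j / ((N : ℝ) - j)) * N
      ≤ T := by
    rw [Finset.sum_mul]
    calc ∑ j ∈ Finset.Icc 1 (N - 1), (j : ℝ) * r ^ j / ((N : ℝ) - j) * N
        ≤ ∑ j ∈ Finset.Icc 1 (N - 1), ((j : ℝ) + (j : ℝ) ^ 2) * r ^ j := by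
          refine Finset.sum_le_sum fun j hj => ?_
          obtain ⟨hj1, hj2⟩ := hjfact j hj
          have hd : (0 : ℝ) < (N : ℝ) - j := by linarith
          rw [div_mul_eq_mul_div, div_le_iff₀ hd]
          have hrj : (0 : ℝ) ≤ r ^ j := pow_nonneg hr0.le j
          have key : ((j : ℝ) + (j : ℝ) ^ 2) * r ^ j * ((N : ℝ) - j)
              - (j : ℝ) * r ^ j * N
              = r ^ j * ((j : ℝ) ^ 2 * ((N : ℝ) - j - 1)) := by ring
          have hpos : 0 ≤ r ^ j * ((j : ℝ) ^ 2 * ((N : ℝ) - j - 1)) :=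
            mul_nonneg hrj (mul_nonneg (sq_nonneg _) (by linarith))
          linarith [key ▸ hpos]
      _ ≤ T := Summable.sum_le_tsum _ (fun i _ => hfnn i) hsf
  -- bound the second part
  have hb2 : r ^ N / (1 - r) * N ≤ T * (1 - r)⁻¹ := by
    have hNle : (N : ℝ) * r ^ N ≤ ((N : ℝ) + (N : ℝ) ^ 2) * r ^ N := by
      nlinarith [pow_nonneg hr0.le N, hN0]
    have hle : ((N : ℝ) + (N : ℝ) ^ 2) * r ^ N ≤ T := Summable.le_tsum hsf N fun i _ => hfnn i
    rw [div_mul_eq_mul_div, div_eq_mul_inv]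
    have h1 : (0 : ℝ) ≤ (1 - r)⁻¹ := by positivity
    calc r ^ N * (N : ℝ) * (1 - r)⁻¹ = ((N : ℝ) * r ^ N) * (1 - r)⁻¹ := by ring
      _ ≤ T * (1 - r)⁻¹ := by
          apply mul_le_mul_of_nonneg_right _ h1
          exact hNle.trans hle
  calc (∑ j ∈ Finset.Icc 1 (N - 1), (j : ℝ) * r ^ j / ((N : ℝ) - j)) * N
        + r ^ N / (1 - r) * N ≤ T + T * (1 - r)⁻¹ := add_le_add hb1 hb2
    _ = T * (1 + (1 - r)⁻¹) := by ring
end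

section
/- For every real r > 1 there is a constant C(r) such that for all natural numbers N and i with 1 ≤ i ≤ N-1, |(N-i)(1 - r^{-1}) r^{-i} Σ_{k=1}^{i-1} r^k/(N-k) - (r^{-1} - r^{-i})| ≤ C(r)/(N-i). -/
open Real Finset

theorem sum_up_to_i (r : ℝ) (hr : 1 < r) :
    ∃ C : ℝ, ∀ N i : ℕ, 1 ≤ i → i < N →
      |((N : ℝ) - i) * (1 - r⁻¹) * r ^ (-(i : ℤ)) *
          (∑ k ∈ Finset.Icc 1 (i - 1), r ^ k / ((N : ℝ) - k))
        - (r⁻¹ - r ^ (-(i : ℤ)))|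
        ≤ C / ((N : ℝ) - i) := by
  have hr0 : (0:ℝ) < r := lt_trans one_pos hr
  set x := r⁻¹ with hxdef
  have hx0 : 0 < x := inv_pos.2 hr0
  have hx1 : x < 1 := inv_lt_one_of_one_lt₀ hr
  have hxne : x ≠ 0 := ne_of_gt hx0
  have hnorm : ‖x‖ < 1 := by rw [Real.norm_eq_abs, abs_of_pos hx0]; exact hx1
  have hsummable : Summable (fun n : ℕ => (n:ℝ) * x ^ n) :=
    (hasSum_coe_mul_geometric_of_norm_lt_one hnorm).summable
  have htsum : ∑' n : ℕ, (n:ℝ) * x ^ n = x / (1 - x)^2 :=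
    tsum_coe_mul_geometric_of_norm_lt_one hnorm
  have hbound : ∀ n : ℕ, ∑ j ∈ Icc 1 n, (j:ℝ) * x ^ j ≤ x / (1-x)^2 := by
    intro n
    have h := Summable.sum_le_tsum (Icc 1 n) (fun j _ => by positivity) hsummable
    rwa [htsum] at h
  have hgeom : ∀ n : ℕ, (1 - x) * ∑ j ∈ Icc 1 n, x ^ j = x - x ^ (n+1) := by
    intro n
    induction n with
    | zero => simp
    | succ m ih =>
      rw [Finset.sum_Icc_succ_top (Nat.le_add_left 1 m), mul_add, ih]
      ring
  refine ⟨x / (1-x)^2, ?_⟩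
  intro N i hi hiN
  have hiR : (i:ℝ) < N := by exact_mod_cast hiN
  have hNi : (0:ℝ) < (N:ℝ) - i := by linarith
  have hrpow : r ^ (-(i:ℤ)) = x ^ i := by
    rw [zpow_neg, zpow_natCast, hxdef, inv_pow]
  have hsum : ((N:ℝ)-i) * (1-x) * x^i * (∑ k ∈ Icc 1 (i-1), r^k/((N:ℝ)-k))
      = ∑ k ∈ Icc 1 (i-1),
          ((1-x) * x^(i-k) - (1-x)*x^(i-k)*((((i-k:ℕ)):ℝ)/((N:ℝ)-k))) := by
    rw [Finset.mul_sum]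
    refine Finset.sum_congr rfl ?_
    intro k hk
    rw [Finset.mem_Icc] at hk
    have hkN : (k:ℝ) < N := by
      have : k < N := by omega
      exact_mod_cast this
    have hNk : ((N:ℝ) - k) ≠ 0 := by linarith
    have hb : x ^ k ≠ 0 := pow_ne_zero _ hxne
    have hxik : x ^ i = x ^ (i-k) * x ^ k := by
      rw [← pow_add]; congr 1; omega
    have hik : ((i-k:ℕ):ℝ) = (i:ℝ) - k := by
      have hki : k ≤ i := by omega
      push_cast [hki]; ring
    have hr' : r ^ k = (x ^ k)⁻¹ := by rw [hxdef, inv_pow, inv_inv]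
    rw [hr', hxik, hik]
    field_simp
    ring
  have hre1 : ∑ k ∈ Icc 1 (i-1), (1-x)*x^(i-k) = ∑ j ∈ Icc 1 (i-1), (1-x)*x^j := by
    refine Finset.sum_nbij' (fun k => i - k) (fun k => i - k) ?_ ?_ ?_ ?_ ?_ <;>
      intro a ha <;> simp only [Finset.mem_Icc] at *
    · omega
    · omega
    · omega
    · omega
  have hre2 : ∑ k ∈ Icc 1 (i-1), x^(i-k) * ((i-k:ℕ):ℝ)
      = ∑ j ∈ Icc 1 (i-1), (j:ℝ) * x^j := by
    refine Finset.sum_nbij' (fun k => i - k) (fun k => i - k) ?_ ?_ ?_ ?_ ?_ <;>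
      intro a ha <;> simp only [Finset.mem_Icc] at *
    · omega
    · omega
    · omega
    · omega
    · rw [mul_comm]
  have hmain : (1-x) * ∑ j ∈ Icc 1 (i-1), x^j = x - x^i := by
    rw [hgeom (i-1)]
    congr 2
    omega
  rw [hrpow, hsum, Finset.sum_sub_distrib, hre1, ← Finset.mul_sum, hmain]
  set E := ∑ k ∈ Icc 1 (i-1), (1-x)*x^(i-k)*((((i-k:ℕ)):ℝ)/((N:ℝ)-k)) with hEdef
  have hterm_nn : ∀ k ∈ Icc 1 (i-1), 0 ≤ (1-x)*x^(i-k)*((((i-k:ℕ)):ℝ)/((N:ℝ)-k)) := by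
    intro k hk
    rw [Finset.mem_Icc] at hk
    have hkN : (k:ℝ) < N := by
      have : k < N := by omega
      exact_mod_cast this
    have h1 : (0:ℝ) ≤ 1 - x := by linarith
    have h2 : (0:ℝ) ≤ (N:ℝ) - k := by linarith
    positivity
  have hE0 : 0 ≤ E := Finset.sum_nonneg hterm_nn
  rw [show x - x^i - E - (x - x^i) = -E by ring, abs_neg, abs_of_nonneg hE0,
    le_div_iff₀ hNi]
  calc E * ((N:ℝ)-i)
      = ∑ k ∈ Icc 1 (i-1), (1-x)*x^(i-k)*((((i-k:ℕ)):ℝ)/((N:ℝ)-k)) * ((N:ℝ)-i) := by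
        rw [hEdef, Finset.sum_mul]
    _ ≤ ∑ k ∈ Icc 1 (i-1), x^(i-k)*(((i-k:ℕ)):ℝ) := by
        refine Finset.sum_le_sum ?_
        intro k hk
        rw [Finset.mem_Icc] at hk
        have hkN : (k:ℝ) < N := by
          have : k < N := by omega
          exact_mod_cast this
        have hNk0 : (0:ℝ) < (N:ℝ) - k := by linarith
        have hkI : (k:ℝ) ≤ (i:ℝ) := by exact_mod_cast (by omega : k ≤ i)
        have hfrac : ((N:ℝ)-i)/((N:ℝ)-k) ≤ 1 := by
          rw [div_le_one hNk0]; linarith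
        have hx1' : 1 - x ≤ 1 := by linarith
        have hnn : (0:ℝ) ≤ x^(i-k)*(((i-k:ℕ)):ℝ) := by positivity
        calc (1-x)*x^(i-k)*((((i-k:ℕ)):ℝ)/((N:ℝ)-k)) * ((N:ℝ)-i)
            = (1-x) * ((x^(i-k)*(((i-k:ℕ)):ℝ)) * (((N:ℝ)-i)/((N:ℝ)-k))) := by ring
          _ ≤ 1 * ((x^(i-k)*(((i-k:ℕ)):ℝ)) * 1) := by
              apply mul_le_mul hx1' ?_ ?_ zero_le_one
              · rw [mul_one]
                exact mul_le_of_le_one_right hnn hfrac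
              · have h0 : (0:ℝ) ≤ ((N:ℝ)-i)/((N:ℝ)-k) := by positivity
                positivity
          _ = x^(i-k)*(((i-k:ℕ)):ℝ) := by ring
    _ = ∑ j ∈ Icc 1 (i-1), (j:ℝ)*x^j := hre2
    _ ≤ x/(1-x)^2 := hbound _
end

section
/- For every real r > 1 there is a constant C(r) such that for all naturals i < N, |(N-i) r^i (1 - r^{-1}) Σ_{k=i}^{N-1} r^{-k}/(N-k) - 1| ≤ C(r)/(N-i). -/
open Real Finset

lemma aux_bound (q : ℝ) (hq0 : 0 < q) (hq1 : q < 1) (A : ℝ)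
    (hApart : ∀ m : ℕ, ∑ j ∈ Finset.range m, (j : ℝ) * ((j : ℝ) + 1) * q ^ j ≤ A)
    (m : ℕ) (hm : 1 ≤ m) :
    |(m : ℝ) * (1 - q) * (∑ j ∈ Finset.range m, q ^ j / ((m : ℝ) - j)) - 1|
      ≤ (A + 1 / (1 - q)) / m := by
  have hm' : (0:ℝ) < m := by exact_mod_cast hm
  have h1q : (0:ℝ) < 1 - q := by linarith
  have hA0 : (0:ℝ) ≤ A := by simpa using hApart 0
  set T : ℝ := ∑ j ∈ Finset.range m, (j : ℝ) * q ^ j / ((m : ℝ) - j) with hTdef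
  have hden : ∀ j ∈ Finset.range m, (0:ℝ) < (m : ℝ) - j := by
    intro j hj
    have : (j:ℝ) < m := by exact_mod_cast Finset.mem_range.mp hj
    linarith
  have hsplit : (m:ℝ) * (∑ j ∈ Finset.range m, q ^ j / ((m : ℝ) - j))
      = (∑ j ∈ Finset.range m, q ^ j) + T := by
    rw [Finset.mul_sum, hTdef, ← Finset.sum_add_distrib]
    refine Finset.sum_congr rfl fun j hj => ?_
    have h := hden j hj
    field_simp
    ring
  have hgeom : (1 - q) * (∑ j ∈ Finset.range m, q ^ j) = 1 - q ^ m := by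
    linear_combination (-1 : ℝ) * geom_sum_mul q m
  have key : (m : ℝ) * (1 - q) * (∑ j ∈ Finset.range m, q ^ j / ((m : ℝ) - j)) - 1
      = (1 - q) * T - q ^ m := by
    linear_combination (1 - q) * hsplit + hgeom
  have hT0 : 0 ≤ T := by
    refine Finset.sum_nonneg fun j hj => div_nonneg ?_ (hden j hj).le
    positivity
  have hTA : T * m ≤ A := by
    rw [hTdef, Finset.sum_mul]
    refine le_trans (Finset.sum_le_sum ?_) (hApart m)
    intro j hj
    have hd := hden j hj
    have hjm : (j:ℝ) + 1 ≤ m := by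
      have : j + 1 ≤ m := Finset.mem_range.mp hj
      exact_mod_cast this
    rw [div_mul_eq_mul_div, div_le_iff₀ hd]
    nlinarith [mul_nonneg (mul_nonneg (sq_nonneg (j:ℝ)) (pow_nonneg hq0.le j))
      (by linarith : (0:ℝ) ≤ (m:ℝ) - j - 1)]
  have hqm : q ^ m * m ≤ 1 / (1 - q) := by
    have h1 : q ^ m * m ≤ ∑ j ∈ Finset.range m, q ^ j := by
      calc q ^ m * m = ∑ _j ∈ Finset.range m, q ^ m := by
            rw [Finset.sum_const, Finset.card_range, nsmul_eq_mul]; ring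
        _ ≤ _ := Finset.sum_le_sum fun j hj =>
            pow_le_pow_of_le_one hq0.le hq1.le (Finset.mem_range.mp hj).le
    have h2 : (∑ j ∈ Finset.range m, q ^ j) ≤ 1 / (1 - q) := by
      rw [le_div_iff₀ h1q, mul_comm]
      have := pow_nonneg hq0.le m
      linarith [hgeom]
    linarith
  rw [key, abs_le]
  constructor
  · have hC : q ^ m ≤ (A + 1 / (1 - q)) / m := by
      rw [le_div_iff₀ hm']
      linarith
    linarith [mul_nonneg h1q.le hT0]
  · have hTle : T ≤ A / m := by rw [le_div_iff₀ hm']; exact hTA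
    have h3 : (1 - q) * T ≤ T := by nlinarith [mul_nonneg hq0.le hT0]
    have hCge : A / m ≤ (A + 1 / (1 - q)) / m := by
      gcongr
      have : (0:ℝ) ≤ 1 / (1 - q) := by positivity
      linarith
    linarith [pow_nonneg hq0.le m]

theorem sum_i_up_to_N_first (r : ℝ) (hr : 1 < r) :
    ∃ C : ℝ, ∀ N i : ℕ, 1 ≤ i → i < N →
      |((N : ℝ) - i) * r ^ i * (1 - r⁻¹) *
          (∑ k ∈ Finset.Icc i (N - 1), r ^ (-(k : ℤ)) / ((N : ℝ) - k)) - 1|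
        ≤ C / ((N : ℝ) - i) := by
  have hr0 : (0:ℝ) < r := by linarith
  have hq0 : 0 < r⁻¹ := inv_pos.mpr hr0
  have hq1 : r⁻¹ < 1 := by
    rw [inv_lt_one_iff₀]; right; exact hr
  have hnorm : ‖r⁻¹‖ < 1 := by
    rw [Real.norm_eq_abs, abs_of_pos hq0]; exact hq1
  have hsummable : Summable (fun j : ℕ => (j:ℝ) * ((j:ℝ) + 1) * (r⁻¹) ^ j) := by
    have h2 := summable_pow_mul_geometric_of_norm_lt_one (R := ℝ) 2 hnorm
    have h1 := summable_pow_mul_geometric_of_norm_lt_one (R := ℝ) 1 hnorm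
    refine (h2.add h1).congr fun n => ?_
    push_cast
    ring
  set A := ∑' j : ℕ, (j:ℝ) * ((j:ℝ) + 1) * (r⁻¹) ^ j with hA
  have hApart : ∀ m : ℕ, ∑ j ∈ Finset.range m, (j:ℝ) * ((j:ℝ) + 1) * (r⁻¹) ^ j ≤ A :=
    fun m => Summable.sum_le_tsum _ (fun j _ => by positivity) hsummable
  refine ⟨A + 1 / (1 - r⁻¹), fun N i hi hiN => ?_⟩
  set m := N - i with hm
  have hm1 : 1 ≤ m := by omega
  have hNcast : (N:ℝ) - i = (m : ℝ) := by
    rw [hm, Nat.cast_sub hiN.le]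
  have hsum_eq : (∑ k ∈ Finset.Icc i (N - 1), r ^ (-(k:ℤ)) / ((N:ℝ) - k))
      = ∑ j ∈ Finset.range m, r ^ (-((i + j : ℕ) : ℤ)) / ((N:ℝ) - (i + j : ℕ)) := by
    rw [← Finset.Ico_add_one_right_eq_Icc, Finset.sum_Ico_eq_sum_range]
    congr 1
    congr 1
    omega
  have hterm : ∀ j ∈ Finset.range m,
      r ^ i * (r ^ (-((i + j : ℕ) : ℤ)) / ((N:ℝ) - (i + j : ℕ)))
        = (r⁻¹) ^ j / ((m:ℝ) - j) := by
    intro j hj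
    have hpow : r ^ i * r ^ (-((i + j : ℕ) : ℤ)) = (r⁻¹) ^ j := by
      rw [← zpow_natCast r i, ← zpow_add₀ hr0.ne']
      rw [show (i:ℤ) + (-((i + j : ℕ) : ℤ)) = -(j:ℤ) by push_cast; ring]
      rw [zpow_neg, zpow_natCast, inv_pow]
    have hden : (N:ℝ) - (i + j : ℕ) = (m:ℝ) - j := by
      push_cast
      rw [← hNcast]
      push_cast
      ring
    rw [hden, ← hpow]
    ring
  have hrw : ((N : ℝ) - i) * r ^ i * (1 - r⁻¹) *
      (∑ k ∈ Finset.Icc i (N - 1), r ^ (-(k : ℤ)) / ((N : ℝ) - k))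
      = (m:ℝ) * (1 - r⁻¹) * (∑ j ∈ Finset.range m, (r⁻¹) ^ j / ((m:ℝ) - j)) := by
    rw [hsum_eq, hNcast]
    have hcong := Finset.sum_congr rfl hterm
    rw [← Finset.mul_sum] at hcong
    linear_combination ((m:ℝ) * (1 - r⁻¹)) * hcong
  rw [hrw, hNcast]
  exact aux_bound r⁻¹ hq0 hq1 A hApart m hm1
end

section
/- For the neutral Moran process on a population of size N, the mean absorption time starting from one mutant is t_1 = N·H_{N-1}, where H_{N-1} is the (N-1)-st harmonic number, derived from t_1 = π_1 Σ_{j=1}^{N-1} Σ_{i=1}^j 1/α_i with π_1 = 1/N and α_i = i(N-i)/N². -/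
open Real Finset

noncomputable def H (n : ℕ) : ℝ := ∑ i ∈ Finset.Icc 1 n, (1 : ℝ) / i

lemma swap_sum (f : ℕ → ℝ) (n : ℕ) :
    ∑ j ∈ Finset.Icc 1 n, ∑ i ∈ Finset.Icc 1 j, f i
      = ∑ i ∈ Finset.Icc 1 n, (((n : ℝ) + 1) - i) * f i := by
  induction n with
  | zero => simp
  | succ n ih =>
      rw [Finset.sum_Icc_succ_top (by omega : 1 ≤ n + 1), ih]
      push_cast
      rw [Finset.sum_Icc_succ_top (by omega : 1 ≤ n + 1)
            (fun i => (((n : ℝ) + 1) + 1 - (i : ℝ)) * f i)]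
      have : ∑ i ∈ Finset.Icc 1 n, (((n : ℝ) + 1 + 1) - i) * f i
          = ∑ i ∈ Finset.Icc 1 n, ((((n : ℝ) + 1) - i) * f i + f i) := by
        apply Finset.sum_congr rfl
        intro i _
        ring
      rw [this, Finset.sum_add_distrib,
          Finset.sum_Icc_succ_top (by omega : 1 ≤ n + 1) f]
      push_cast
      ring

theorem neutral_t1 (N : ℕ) (hN : 1 ≤ N) :
    (1 / (N : ℝ)) * ∑ j ∈ Finset.Icc 1 (N - 1), ∑ i ∈ Finset.Icc 1 j,
        1 / (((i : ℝ) * ((N : ℝ) - i)) / (N : ℝ) ^ 2)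
      = N * H (N - 1) := by
  rw [swap_sum]
  have hNR : (N : ℝ) ≥ 1 := by exact_mod_cast hN
  have hcast : ((N - 1 : ℕ) : ℝ) + 1 = (N : ℝ) := by
    have : N - 1 + 1 = N := by omega
    exact_mod_cast congrArg (Nat.cast : ℕ → ℝ) this
  have key : ∑ i ∈ Finset.Icc 1 (N - 1), (((N - 1 : ℕ) : ℝ) + 1 - i)
        * (1 / (((i : ℝ) * ((N : ℝ) - i)) / (N : ℝ) ^ 2))
      = (N : ℝ) ^ 2 * ∑ i ∈ Finset.Icc 1 (N - 1), (1 : ℝ) / i := by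
    rw [Finset.mul_sum]
    apply Finset.sum_congr rfl
    intro i hi
    simp only [Finset.mem_Icc] at hi
    have hi1 : (1 : ℝ) ≤ (i : ℝ) := by exact_mod_cast hi.1
    have hi2 : (i : ℝ) ≤ (N : ℝ) - 1 := by
      have : i + 1 ≤ N := by omega
      have := (Nat.cast_le (α := ℝ)).mpr this
      push_cast at this; linarith
    have hipos : (i : ℝ) ≠ 0 := by linarith
    have hNi : (N : ℝ) - i ≠ 0 := by linarith
    have hN0 : (N : ℝ) ≠ 0 := by linarith
    rw [hcast]
    field_simp
  rw [key]
  have : (N : ℝ) ≠ 0 := by linarith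
  rw [H]
  field_simp
end

section
/- For the neutral Moran process on a population of size N and 1 ≤ i ≤ N-1, the mean absorption time from state i equals t_i = N[(N-i)(H_{N-1} - H_{N-i-1}) + i(H_{N-1} - H_i)]. -/
open Real Finset

lemma H_zero : H 0 = 0 := by simp [H]

lemma H_succ (m : ℕ) : H (m+1) = H m + 1/((m:ℝ)+1) := by
  unfold H
  rw [Finset.sum_Icc_succ_top (by omega : 1 ≤ m+1)]
  push_cast; ring

lemma sumH (n : ℕ) : ∑ j ∈ Finset.Icc 1 n, H j = ((n:ℝ)+1) * H n - n := by
  induction n with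
  | zero => simp [H_zero]
  | succ n ih =>
    rw [Finset.sum_Icc_succ_top (by omega : 1 ≤ n+1), ih, H_succ]
    have hne : (n:ℝ)+1 ≠ 0 := by positivity
    push_cast
    field_simp
    ring

lemma tailsum (n j : ℕ) (hj : j ≤ n) :
    ∑ k ∈ Finset.Icc 1 j, 1/((n:ℝ)+1-k) = H n - H (n-j) := by
  induction j with
  | zero => simp
  | succ j ih =>
    rw [Finset.sum_Icc_succ_top (by omega : 1 ≤ j+1), ih (by omega)]
    have h1 : n - j = (n - (j+1)) + 1 := by omega
    rw [h1, H_succ]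
    have h2 : ((n:ℝ)+1 - ((j+1:ℕ):ℝ)) = ((n - (j+1) : ℕ) : ℝ) + 1 := by
      push_cast [Nat.cast_sub (by omega : j+1 ≤ n)]; ring
    rw [h2]; ring

lemma Icc_one_eq_range (m : ℕ) (f : ℕ → ℝ) :
    ∑ j ∈ Finset.Icc 1 m, f j = ∑ j ∈ Finset.range m, f (j+1) := by
  rw [← Finset.Ico_add_one_right_eq_Icc, Finset.sum_Ico_eq_sum_range]
  have : m + 1 - 1 = m := by omega
  rw [this]
  exact Finset.sum_congr rfl (fun l _ => by rw [add_comm])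

lemma reflect (n i : ℕ) (hi : i ≤ n) :
    ∑ j ∈ Finset.Icc i n, H (n - j) = ∑ j ∈ Finset.Icc 1 (n-i), H j := by
  rw [← Finset.Ico_add_one_right_eq_Icc, Finset.sum_Ico_eq_sum_range]
  have h1 : n + 1 - i = (n - i) + 1 := by omega
  rw [h1]
  have h2 : ∀ l ∈ Finset.range (n - i + 1), H (n - (i + l)) = H ((n-i) - l) := by
    intro l hl; congr 1; omega
  rw [Finset.sum_congr rfl h2]
  have h3 := Finset.sum_range_reflect (fun l => H l) (n-i+1)
  simp only [Nat.add_sub_cancel] at h3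
  rw [h3, Finset.sum_range_succ', Icc_one_eq_range, H_zero, add_zero]

lemma myInnerSum (n j : ℕ) (hj : j ≤ n) :
    ∑ k ∈ Finset.Icc 1 j, 1 / ((k : ℝ) * ((n:ℝ) + 1 - k) / ((n:ℝ)+1) ^ 2)
      = ((n:ℝ)+1) * (H j + (H n - H (n-j))) := by
  have key : ∀ k ∈ Finset.Icc 1 j,
      1 / ((k : ℝ) * ((n:ℝ) + 1 - k) / ((n:ℝ)+1) ^ 2)
        = ((n:ℝ)+1) * ((1:ℝ)/(k:ℝ)) + ((n:ℝ)+1) * (1/((n:ℝ)+1-k)) := by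
    intro k hk
    simp only [Finset.mem_Icc] at hk
    have hk0 : (0:ℝ) < k := by exact_mod_cast hk.1
    have hk1 : (0:ℝ) < (n:ℝ)+1-k := by
      have : (k:ℝ) ≤ n := by exact_mod_cast le_trans hk.2 hj
      linarith
    have hn0 : (0:ℝ) < (n:ℝ)+1 := by positivity
    field_simp
    ring
  rw [Finset.sum_congr rfl key, Finset.sum_add_distrib, ← Finset.mul_sum, ← Finset.mul_sum,
    tailsum n j hj]
  have : ∑ k ∈ Finset.Icc 1 j, (1:ℝ)/(k:ℝ) = H j := rfl
  rw [this]; ring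

theorem neutral_ti (N i : ℕ) (hi1 : 1 ≤ i) (hiN : i ≤ N - 1) :
    (∑ j ∈ Finset.Icc i (N - 1), ∑ k ∈ Finset.Icc 1 j,
        1 / (((k : ℝ) * ((N : ℝ) - k)) / (N : ℝ) ^ 2))
      - (N * H (N - 1)) * ((N : ℝ) - i)
      = N * (((N : ℝ) - i) * (H (N - 1) - H (N - i - 1)) + i * (H (N - 1) - H i)) := by
  have hN : 2 ≤ N := by omega
  obtain ⟨n, rfl⟩ : ∃ n, N = n + 1 := ⟨N-1, by omega⟩
  simp only [Nat.add_sub_cancel] at *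
  have e1 : n + 1 - i - 1 = n - i := by omega
  rw [e1]
  push_cast
  have hsum : ∑ j ∈ Finset.Icc i n, ∑ k ∈ Finset.Icc 1 j,
      1 / ((k : ℝ) * ((n:ℝ) + 1 - k) / ((n:ℝ)+1) ^ 2)
      = ∑ j ∈ Finset.Icc i n, ((n:ℝ)+1) * (H j + (H n - H (n-j))) :=
    Finset.sum_congr rfl (fun j hj => myInnerSum n j (Finset.mem_Icc.mp hj).2)
  rw [hsum, ← Finset.mul_sum]
  have expand : ∑ j ∈ Finset.Icc i n, (H j + (H n - H (n-j)))
      = (∑ j ∈ Finset.Icc i n, H j)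
        + ((((n:ℝ) - i) + 1) * H n - ∑ j ∈ Finset.Icc i n, H (n-j)) := by
    rw [Finset.sum_add_distrib, Finset.sum_sub_distrib, Finset.sum_const, Nat.card_Icc]
    have h : n + 1 - i = n - i + 1 := by omega
    rw [h]
    push_cast [Nat.cast_sub hiN, nsmul_eq_mul]
    ring
  have hsd : Finset.Icc 1 n \ Finset.Icc 1 (i-1) = Finset.Icc i n := by
    ext x; simp only [Finset.mem_sdiff, Finset.mem_Icc]; omega
  have hsub : Finset.Icc 1 (i-1) ⊆ Finset.Icc 1 n := Finset.Icc_subset_Icc_right (by omega)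
  have S1 : ∑ j ∈ Finset.Icc i n, H j = (((n:ℝ)+1) * H n - n) - ((i:ℝ) * H i - i) := by
    rw [← hsd, Finset.sum_sdiff_eq_sub hsub, sumH, sumH]
    obtain ⟨m, rfl⟩ : ∃ m, i = m + 1 := ⟨i-1, by omega⟩
    simp only [Nat.add_sub_cancel]
    rw [H_succ]
    have hm : (m:ℝ)+1 ≠ 0 := by positivity
    push_cast
    field_simp
    ring
  have S2 : ∑ j ∈ Finset.Icc i n, H (n-j) = (((n:ℝ)-i)+1) * H (n-i) - ((n:ℝ)-i) := by
    rw [reflect n i hiN, sumH, Nat.cast_sub hiN]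
  rw [expand, S1, S2]
  ring
end

section
/- Fix a rational x ∈ (0,1). For the neutral Moran process with population size N (ranging over multiples of the denominator of x so that Nx is an integer), the mean conditional fixation time satisfies t_{Nx}^N = −((1-x)log(1-x)/x) N² − N/2 + O(1) as N → ∞. -/
open Real Finset

lemma log_one_sub_bound (u : ℝ) (hu0 : 0 < u) (hu : u ≤ 1/2) :
    |Real.log (1 - u) + u| ≤ 2 * u ^ 2 := by
  have h := Real.abs_log_sub_add_sum_range_le (x := u) (by rw [abs_of_pos hu0]; linarith) 1
  rw [Finset.sum_range_one, abs_of_pos hu0] at h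
  simp only [pow_one, Nat.cast_zero, zero_add, div_one] at h
  have h1 : u ^ 2 / (1 - u) ≤ 2 * u ^ 2 := by
    rw [div_le_iff₀ (by linarith)]
    nlinarith
  calc |Real.log (1-u) + u| = |u + Real.log (1-u)| := by rw [add_comm]
    _ ≤ u ^ (1+1) / (1 - u) := h
    _ ≤ 2 * u ^ 2 := h1

lemma log_one_add_bound (u : ℝ) (hu0 : 0 < u) (hu : u ≤ 1/2) :
    |Real.log (1 + u) - u| ≤ 2 * u ^ 2 := by
  have h := Real.abs_log_sub_add_sum_range_le (x := -u) (by rw [abs_neg, abs_of_pos hu0]; linarith) 1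
  rw [Finset.sum_range_one, abs_neg, abs_of_pos hu0] at h
  simp only [pow_one, Nat.cast_zero, zero_add, div_one, sub_neg_eq_add] at h
  have h1 : u ^ 2 / (1 - u) ≤ 2 * u ^ 2 := by
    rw [div_le_iff₀ (by linarith)]
    nlinarith
  have he : Real.log (1 + u) - u = -u + Real.log (1+u) := by ring
  rw [he]
  calc |-u + Real.log (1+u)| ≤ u ^ (1+1) / (1 - u) := h
    _ ≤ 2 * u ^ 2 := h1

lemma log_ratio_bound (u : ℝ) (hu0 : 0 < u) (hu : u ≤ 1/2) :
    |Real.log (1+u) - Real.log (1-u) - 2*u| ≤ 4 * u ^ 3 := by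
  have h1 := Real.abs_log_sub_add_sum_range_le (x := u) (by rw [abs_of_pos hu0]; linarith) 2
  have h2 := Real.abs_log_sub_add_sum_range_le (x := -u) (by rw [abs_neg, abs_of_pos hu0]; linarith) 2
  rw [abs_of_pos hu0] at h1
  rw [abs_neg, abs_of_pos hu0] at h2
  rw [Finset.sum_range_succ, Finset.sum_range_one] at h1 h2
  norm_num at h1 h2
  have hd : u ^ 3 / (1 - u) ≤ 2 * u ^ 3 := by
    rw [div_le_iff₀ (by linarith)]
    nlinarith [pow_pos hu0 3]
  have e1 : |u + u^2/2 + Real.log (1 - u)| ≤ 2 * u^3 := le_trans h1 hd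
  have e2 : |-u + u^2/2 + Real.log (1 + u)| ≤ 2 * u^3 := le_trans h2 hd
  have he : Real.log (1+u) - Real.log (1-u) - 2*u
      = (-u + u^2/2 + Real.log (1 + u)) - (u + u^2/2 + Real.log (1 - u)) := by ring
  rw [he]
  calc |_ - _| ≤ |-u + u^2/2 + Real.log (1 + u)| + |u + u^2/2 + Real.log (1 - u)| := abs_sub _ _
    _ ≤ 2*u^3 + 2*u^3 := add_le_add e2 e1
    _ = 4*u^3 := by ring

noncomputable def flog (k : ℕ) : ℝ := Real.log ((k:ℝ) + 1/2)

lemma flog_sub (k : ℕ) (hk : 1 ≤ k) :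
    flog k - flog (k-1) = Real.log ((k:ℝ) + 1/2) - Real.log ((k:ℝ) - 1/2) := by
  unfold flog
  congr 2
  rw [Nat.cast_sub hk, Nat.cast_one]
  ring

lemma harmonic_term_bound (k : ℕ) (hk : 1 ≤ k) :
    |1/(k:ℝ) - (Real.log ((k:ℝ) + 1/2) - Real.log ((k:ℝ) - 1/2))| ≤ 1/(2*(k:ℝ)^3) := by
  have hk1 : (1:ℝ) ≤ (k:ℝ) := by exact_mod_cast hk
  have hk0 : (0:ℝ) < (k:ℝ) := by linarith
  set u : ℝ := 1/(2*(k:ℝ)) with hu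
  have hu0 : 0 < u := by positivity
  have huh : u ≤ 1/2 := by
    rw [hu, div_le_div_iff₀ (by linarith) (by norm_num)]
    linarith
  have e1 : (k:ℝ) + 1/2 = (k:ℝ) * (1 + u) := by
    rw [hu]; field_simp
  have e2 : (k:ℝ) - 1/2 = (k:ℝ) * (1 - u) := by
    rw [hu]; field_simp
  have l1 : Real.log ((k:ℝ) + 1/2) = Real.log (k:ℝ) + Real.log (1 + u) := by
    rw [e1, Real.log_mul (by positivity) (by positivity)]
  have l2 : Real.log ((k:ℝ) - 1/2) = Real.log (k:ℝ) + Real.log (1 - u) := by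
    rw [e2, Real.log_mul (by positivity) (by nlinarith)]
  have hinv : 1/(k:ℝ) = 2*u := by rw [hu]; field_simp
  have he : 1/(k:ℝ) - (Real.log ((k:ℝ) + 1/2) - Real.log ((k:ℝ) - 1/2))
      = -(Real.log (1+u) - Real.log (1-u) - 2*u) := by
    rw [l1, l2, hinv]; ring
  rw [he, abs_neg]
  have heq : 4 * u^3 = 1/(2*(k:ℝ)^3) := by rw [hu]; field_simp; ring
  linarith [log_ratio_bound u hu0 huh]

lemma telescope_log (f : ℕ → ℝ) (a : ℕ) : ∀ b : ℕ, a ≤ b →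
    ∑ k ∈ Finset.Ioc a b, (f k - f (k-1)) = f b - f a := by
  intro b
  induction b with
  | zero => intro h; interval_cases a; simp
  | succ b ih =>
    intro h
    rcases Nat.lt_or_ge a (b+1) with h' | h'
    · have hab : a ≤ b := Nat.lt_succ_iff.mp h'
      rw [Finset.sum_Ioc_succ_top hab, ih hab]
      simp only [Nat.add_sub_cancel]
      ring
    · have : a = b + 1 := le_antisymm h h'
      subst this
      simp

lemma key_id (n xr S lg : ℝ) (hn : n ≠ 0) (hx : xr ≠ 0) (hx1 : (1:ℝ) - xr ≠ 0) :
    (n * (n*(1-xr)) / (n*xr)) * (n*S + 1) - (-((1-xr) * lg / xr) * n^2 - n/2)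
      = (n^2*(1-xr)/xr) * (S - (-lg - 1/(2*n) - 1/(2*(n*(1-xr))))) := by
  field_simp
  ring

theorem neutral_tiN_x_fixed (x : ℚ) (hx0 : 0 < x) (hx1 : x < 1) :
    ∃ C : ℝ, ∀ N i : ℕ, 1 ≤ N → (i : ℚ) = N * x →
      |((N : ℝ) * ((N : ℝ) - i) / i) * ((N : ℝ) * (H (N - 1) - H (N - i)) + 1)
          - (-((1 - (x : ℝ)) * Real.log (1 - (x : ℝ)) / (x : ℝ)) * (N : ℝ) ^ 2
              - (N : ℝ) / 2)|
        ≤ C := by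
  set xr : ℝ := (x:ℝ) with hxr
  have hx0' : (0:ℝ) < xr := by rw [hxr]; exact_mod_cast hx0
  have hx1' : xr < 1 := by rw [hxr]; exact_mod_cast hx1
  refine ⟨(1-xr)/(2*xr) + 1/(2*xr*(1-xr)) + 1/(2*xr*(1-xr)^2), ?_⟩
  intro N i hN hi
  have hNq : (0:ℚ) < (N:ℚ) := by exact_mod_cast hN
  have hiq : (0:ℚ) < (i:ℚ) := by rw [hi]; exact mul_pos hNq hx0
  have hi1 : 1 ≤ i := by
    have : 0 < i := by exact_mod_cast hiq
    omega
  have hiN : i < N := by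
    have : (i:ℚ) < (N:ℚ) := by rw [hi]; nlinarith
    exact_mod_cast this
  set m := N - i with hm
  have hm1 : 1 ≤ m := by omega
  have hmN : m ≤ N - 1 := by omega
  set n : ℝ := (N:ℝ) with hn
  have hn1 : (1:ℝ) ≤ n := by rw [hn]; exact_mod_cast hN
  have hn0 : (0:ℝ) < n := by linarith
  have ha : (i:ℝ) = n * xr := by
    have := congrArg (fun q : ℚ => (q:ℝ)) hi
    push_cast at this
    exact this
  have hmi : (m:ℝ) = n - (i:ℝ) := by
    rw [hm, Nat.cast_sub hiN.le]
  have hb : (m:ℝ) = n * (1 - xr) := by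
    rw [hmi, ha]; ring
  set b : ℝ := (m:ℝ) with hbdef
  have hb1 : (1:ℝ) ≤ b := by rw [hbdef]; exact_mod_cast hm1
  have hb0 : (0:ℝ) < b := by linarith
  -- H as sum over Ioc 0
  have hIcc : ∀ j : ℕ, H j = ∑ k ∈ Finset.Ioc 0 j, 1/(k:ℝ) := by
    intro j
    rw [H, ← Finset.Icc_add_one_left_eq_Ioc]; rfl
  have hS : H (N-1) - H m = ∑ k ∈ Finset.Ioc m (N-1), 1/(k:ℝ) := by
    have := Finset.sum_Ioc_consecutive (fun k => (1:ℝ)/(k:ℝ)) (Nat.zero_le m) hmN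
    rw [hIcc, hIcc]
    linarith
  -- telescoping
  have htel := telescope_log flog m (N-1) hmN
  have hfN : flog (N-1) = Real.log (n - 1/2) := by
    unfold flog
    congr 1
    rw [Nat.cast_sub hN, Nat.cast_one]
    ring
  have hfm : flog m = Real.log (b + 1/2) := rfl
  -- Claim A
  have hA : |(H (N-1) - H m) - (Real.log (n - 1/2) - Real.log (b + 1/2))| ≤ n/(2*b^3) := by
    rw [hS, ← hfN, ← hfm, ← htel, ← Finset.sum_sub_distrib]
    have hbound : ∀ k ∈ Finset.Ioc m (N-1), |1/(k:ℝ) - (flog k - flog (k-1))| ≤ 1/(2*b^3) := by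
      intro k hk
      rw [Finset.mem_Ioc] at hk
      have hk1 : 1 ≤ k := by omega
      rw [flog_sub k hk1]
      refine le_trans (harmonic_term_bound k hk1) ?_
      have hkb : b + 1 ≤ (k:ℝ) := by
        have h' : m + 1 ≤ k := hk.1
        rw [hbdef]
        exact_mod_cast h'
      have hbk : b ≤ (k:ℝ) := by linarith
      have hk3 : 2*b^3 ≤ 2*(k:ℝ)^3 := by
        have := pow_le_pow_left₀ (le_of_lt hb0) hbk 3
        linarith
      apply div_le_div_of_nonneg_left (by norm_num) (by positivity) hk3
    calc |∑ k ∈ Finset.Ioc m (N-1), (1/(k:ℝ) - (flog k - flog (k-1)))|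
        ≤ ∑ k ∈ Finset.Ioc m (N-1), |1/(k:ℝ) - (flog k - flog (k-1))| :=
          Finset.abs_sum_le_sum_abs _ _
      _ ≤ (Finset.Ioc m (N-1)).card • (1/(2*b^3)) := Finset.sum_le_card_nsmul _ _ _ hbound
      _ ≤ n/(2*b^3) := by
          rw [Nat.card_Ioc, nsmul_eq_mul]
          have hcard : ((N - 1 - m : ℕ):ℝ) ≤ n := by
            have h' : N - 1 - m ≤ N := by omega
            rw [hn]
            exact_mod_cast h'
          rw [div_eq_mul_one_div n (2*b^3)]
          apply mul_le_mul_of_nonneg_right hcard (by positivity)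
  -- Claim B
  have hun : (1:ℝ)/(2*n) ≤ 1/2 := by
    rw [div_le_div_iff₀ (by linarith) (by norm_num)]; linarith
  have hub : (1:ℝ)/(2*b) ≤ 1/2 := by
    rw [div_le_div_iff₀ (by linarith) (by norm_num)]; linarith
  have hu1 := log_one_sub_bound (1/(2*n)) (by positivity) hun
  have hu2 := log_one_add_bound (1/(2*b)) (by positivity) hub
  have hq1 : 2 * (1/(2*n))^2 = 1/(2*n^2) := by field_simp
  have hq2 : 2 * (1/(2*b))^2 = 1/(2*b^2) := by field_simp
  have hlogn : Real.log (n - 1/2) = Real.log n + Real.log (1 - 1/(2*n)) := by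
    have h1 : n - 1/2 = n * (1 - 1/(2*n)) := by field_simp
    rw [h1, Real.log_mul (ne_of_gt hn0) (show (1:ℝ) - 1/(2*n) ≠ 0 from (by linarith : (0:ℝ) < 1 - 1/(2*n)).ne')]
  have hlogb : Real.log (b + 1/2) = Real.log b + Real.log (1 + 1/(2*b)) := by
    have h1 : b + 1/2 = b * (1 + 1/(2*b)) := by field_simp
    rw [h1, Real.log_mul (ne_of_gt hb0) (by positivity)]
  have hlogbn : Real.log b = Real.log n + Real.log (1 - xr) := by
    rw [hb, Real.log_mul (ne_of_gt hn0) (show (1:ℝ) - xr ≠ 0 from (by linarith : (0:ℝ) < 1 - xr).ne')]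
  have hB : |(Real.log (n - 1/2) - Real.log (b + 1/2))
      - (-Real.log (1 - xr) - 1/(2*n) - 1/(2*b))| ≤ 1/(2*n^2) + 1/(2*b^2) := by
    rw [hlogn, hlogb, hlogbn]
    have he : (Real.log n + Real.log (1 - 1/(2*n)))
        - (Real.log n + Real.log (1 - xr) + Real.log (1 + 1/(2*b)))
        - (-Real.log (1 - xr) - 1/(2*n) - 1/(2*b))
        = (Real.log (1 - 1/(2*n)) + 1/(2*n)) - (Real.log (1 + 1/(2*b)) - 1/(2*b)) := by ring
    rw [he]
    calc |_ - _| ≤ |Real.log (1 - 1/(2*n)) + 1/(2*n)| + |Real.log (1 + 1/(2*b)) - 1/(2*b)| :=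
          abs_sub _ _
      _ ≤ 2 * (1/(2*n))^2 + 2 * (1/(2*b))^2 := add_le_add hu1 hu2
      _ = 1/(2*n^2) + 1/(2*b^2) := by rw [hq1, hq2]
  -- combine
  have hD : |(H (N-1) - H m) - (-Real.log (1 - xr) - 1/(2*n) - 1/(2*b))|
      ≤ 1/(2*n^2) + 1/(2*b^2) + n/(2*b^3) := by
    calc |(H (N-1) - H m) - (-Real.log (1 - xr) - 1/(2*n) - 1/(2*b))|
        ≤ |(H (N-1) - H m) - (Real.log (n - 1/2) - Real.log (b + 1/2))|
          + |(Real.log (n - 1/2) - Real.log (b + 1/2))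
              - (-Real.log (1 - xr) - 1/(2*n) - 1/(2*b))| := abs_sub_le _ _ _
      _ ≤ n/(2*b^3) + (1/(2*n^2) + 1/(2*b^2)) := add_le_add hA hB
      _ = 1/(2*n^2) + 1/(2*b^2) + n/(2*b^3) := by ring
  -- rewrite goal
  rw [show ((N:ℝ) - (i:ℝ)) = b from hmi.symm, ha, hb]
  rw [key_id n xr (H (N-1) - H m) (Real.log (1 - xr)) (ne_of_gt hn0)
    (ne_of_gt hx0') ((by linarith : (0:ℝ) < 1 - xr).ne')]
  rw [abs_mul]
  have hAgt : (0:ℝ) < n^2*(1-xr)/xr :=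
    div_pos (mul_pos (pow_pos hn0 2) (by linarith)) hx0'
  have hApos : |n^2*(1-xr)/xr| = n^2*(1-xr)/xr := abs_of_pos hAgt
  rw [hApos]
  have hDb : |(H (N-1) - H m) - (-Real.log (1 - xr) - 1/(2*n) - 1/(2*(n*(1-xr))))|
      ≤ 1/(2*n^2) + 1/(2*(n*(1-xr))^2) + n/(2*(n*(1-xr))^3) := by
    rw [← hb]
    exact hD
  calc n^2*(1-xr)/xr * |(H (N-1) - H m) - (-Real.log (1 - xr) - 1/(2*n) - 1/(2*(n*(1-xr))))|
      ≤ n^2*(1-xr)/xr * (1/(2*n^2) + 1/(2*(n*(1-xr))^2) + n/(2*(n*(1-xr))^3)) :=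
        mul_le_mul_of_nonneg_left hDb hAgt.le
    _ = (1-xr)/(2*xr) + 1/(2*xr*(1-xr)) + 1/(2*xr*(1-xr)^2) := by
        have h1x : (0:ℝ) < 1 - xr := by linarith
        field_simp
end

section
/- For real r with 0 < r < 1 there is a constant C(r) such that for all N ≥ 2, t_1 = (N(1+r)/(r(1-r^{-N}))) H_{N-1} − (N r^{-N}/(1-r^{-N})) Σ_{k=1}^{N-1} (1/(N-k) + 1/(rk)) r^k satisfies |t_1 + (log(1-r)/r) N − r/(1-r)| ≤ C(r)/N. -/
open Real Finset

lemma aux_pow_div_le_exp (x : ℝ) (hx : 0 ≤ x) (m : ℕ) :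
    x ^ m / m.factorial ≤ Real.exp x := by
  calc x ^ m / m.factorial
      ≤ ∑ i ∈ Finset.range (m + 1), x ^ i / i.factorial :=
        Finset.single_le_sum (f := fun i => x ^ i / i.factorial)
          (fun i _ => by positivity) (Finset.self_mem_range_succ m)
    _ ≤ Real.exp x := Real.sum_le_exp_of_nonneg hx _

/-- For `0 < s < 1`, `n^m * s^n ≤ m! / (-log s)^m`. -/
lemma aux_pow_mul_pow_le (s : ℝ) (hs0 : 0 < s) (hs1 : s < 1) (m n : ℕ) :
    (n : ℝ) ^ m * s ^ n ≤ m.factorial / (-Real.log s) ^ m := by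
  set L : ℝ := -Real.log s with hL
  have hLpos : 0 < L := by
    have := Real.log_neg hs0 hs1
    simp only [hL]; linarith
  have hsn : s ^ n = (Real.exp ((n : ℝ) * L))⁻¹ := by
    rw [← Real.exp_log hs0, ← Real.exp_nat_mul, ← Real.exp_neg]
    simp only [hL]; ring
  have key : ((n : ℝ) * L) ^ m / m.factorial ≤ Real.exp ((n : ℝ) * L) :=
    aux_pow_div_le_exp _ (by positivity) m
  have key2 : (n : ℝ) ^ m * L ^ m ≤ (m.factorial : ℝ) * Real.exp ((n : ℝ) * L) := by
    rw [div_le_iff₀ (by positivity)] at key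
    calc (n : ℝ) ^ m * L ^ m = ((n : ℝ) * L) ^ m := (mul_pow _ _ _).symm
      _ ≤ (m.factorial : ℝ) * Real.exp ((n : ℝ) * L) := by linarith
  rw [hsn, mul_inv_le_iff₀ (Real.exp_pos _), div_mul_eq_mul_div,
    le_div_iff₀ (pow_pos hLpos m)]
  linarith

set_option maxHeartbeats 1000000 in
theorem t1_asymptotic_r_lt_one (r : ℝ) (hr0 : 0 < r) (hr1 : r < 1) :
    ∃ C : ℝ, ∀ N : ℕ, 2 ≤ N →
      |((N : ℝ) * (1 + r) / (r * (1 - r ^ (-(N : ℤ))))) * H (N - 1)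
          - ((N : ℝ) * r ^ (-(N : ℤ)) / (1 - r ^ (-(N : ℤ)))) *
              (∑ k ∈ Finset.Icc 1 (N - 1), (1 / ((N : ℝ) - k) + 1 / (r * k)) * r ^ k)
          + (Real.log (1 - r) / r) * N - r / (1 - r)|
        ≤ C / N := by
  have h1r : (0:ℝ) < 1 - r := by linarith
  set L : ℝ := -Real.log r with hLdef
  have hL : 0 < L := by
    have := Real.log_neg hr0 hr1
    simp only [hLdef]; linarith
  set s : ℝ := Real.sqrt r with hsdef
  have hs0 : 0 < s := Real.sqrt_pos.2 hr0
  have hs1 : s < 1 := by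
    have : Real.sqrt r < Real.sqrt 1 := Real.sqrt_lt_sqrt hr0.le hr1
    simpa using this
  have hss : s * s = r := Real.mul_self_sqrt hr0.le
  have h1s : (0:ℝ) < 1 - s := by linarith
  have hLs : 0 < -Real.log s := by
    have := Real.log_neg hs0 hs1; linarith
  have hLne : L ≠ 0 := ne_of_gt hL
  clear_value L s
  refine ⟨12 / (r * (1 - r) * L ^ 3) + 4 / ((1 - r) ^ 2 * L ^ 2)
      + 4 / ((-Real.log s) ^ 2 * (1 - s)) + 1 / ((1 - r) * L)
      + 1 / (r * (1 - r) * L), ?_⟩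
  intro N hN
  have hN0 : (0:ℝ) < N := by positivity
  have hNn : N ≠ 0 := by omega
  set x : ℝ := r ^ N with hxdef
  have hx0 : 0 < x := pow_pos hr0 N
  have hx1 : x < 1 := pow_lt_one₀ hr0.le hr1 hNn
  have h1x : (0:ℝ) < 1 - x := by linarith
  have hxr : x ≤ r := pow_le_of_le_one hr0.le hr1.le hNn
  have h1rx : 1 - r ≤ 1 - x := by linarith
  have hz : r ^ (-(N : ℤ)) = x⁻¹ := by
    rw [zpow_neg, zpow_natCast]
  have hIcc : Finset.Icc 1 (N - 1) = Finset.Ico 1 N := by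
    rw [← Finset.Ico_add_one_right_eq_Icc]
    congr 1
    omega
  -- facts for k ∈ Icc 1 (N-1)
  have hk_facts : ∀ k ∈ Finset.Icc 1 (N - 1),
      (1:ℝ) ≤ (k:ℝ) ∧ (k:ℝ) + 1 ≤ (N:ℝ) := by
    intro k hk
    rw [Finset.mem_Icc] at hk
    constructor
    · exact_mod_cast hk.1
    · have : k + 1 ≤ N := by omega
      exact_mod_cast this
  set S : ℝ := ∑ k ∈ Finset.Icc 1 (N - 1), (1 / ((N : ℝ) - k) + 1 / (r * k)) * r ^ k
    with hSdef
  set G : ℝ := ∑ k ∈ Finset.Icc 1 (N - 1), r ^ k / (k : ℝ) with hGdef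
  set P3 : ℝ := ∑ k ∈ Finset.Icc 1 (N - 1), r ^ k * (k : ℝ) / ((N : ℝ) - k) with hP3def
  set HH : ℝ := H (N - 1) with hHHdef
  have hgeom : ∑ k ∈ Finset.Icc 1 (N - 1), r ^ k = (r - x) / (1 - r) := by
    rw [hIcc, geom_sum_Ico' (by linarith : r ≠ 1) (by omega : 1 ≤ N)]
    rw [pow_one, ← hxdef]
  have hNS : (N : ℝ) * S = (r - x) / (1 - r) + P3 + ((N : ℝ) / r) * G := by
    have hterm : ∀ k ∈ Finset.Icc 1 (N - 1),
        (N : ℝ) * ((1 / ((N : ℝ) - k) + 1 / (r * k)) * r ^ k)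
          = r ^ k + r ^ k * (k : ℝ) / ((N : ℝ) - k) + ((N : ℝ) / r) * (r ^ k / (k : ℝ)) := by
      intro k hk
      obtain ⟨hk1, hkN⟩ := hk_facts k hk
      have h1 : (N : ℝ) - k ≠ 0 := by linarith
      have h2 : (k : ℝ) ≠ 0 := by linarith
      have h3 : r ≠ 0 := ne_of_gt hr0
      field_simp
      ring
    calc (N : ℝ) * S = ∑ k ∈ Finset.Icc 1 (N - 1),
          (N : ℝ) * ((1 / ((N : ℝ) - k) + 1 / (r * k)) * r ^ k) := by
          rw [hSdef, Finset.mul_sum]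
      _ = ∑ k ∈ Finset.Icc 1 (N - 1),
          (r ^ k + r ^ k * (k : ℝ) / ((N : ℝ) - k) + ((N : ℝ) / r) * (r ^ k / (k : ℝ))) :=
          Finset.sum_congr rfl hterm
      _ = (∑ k ∈ Finset.Icc 1 (N - 1), r ^ k) + P3 + ((N : ℝ) / r) * G := by
          rw [Finset.sum_add_distrib, Finset.sum_add_distrib, hP3def, hGdef, Finset.mul_sum]
      _ = (r - x) / (1 - r) + P3 + ((N : ℝ) / r) * G := by rw [hgeom]
  clear_value x S G P3 HH
  have hmain : ((N : ℝ) * (1 + r) / (r * (1 - x⁻¹))) * HH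
      - ((N : ℝ) * x⁻¹ / (1 - x⁻¹)) * S
      + (Real.log (1 - r) / r) * N - r / (1 - r)
      = -(((N : ℝ) * (1 + r) * x / (r * (1 - x))) * HH)
        + ((N : ℝ) * x / (1 - x)) * S
        + P3 + (-(x / (1 - r))) + ((N : ℝ) / r) * (G + Real.log (1 - r)) := by
    have hxne : x ≠ 0 := ne_of_gt hx0
    have h1xne : (1 : ℝ) - x ≠ 0 := ne_of_gt h1x
    have hrne : r ≠ 0 := ne_of_gt hr0
    have h1rne : (1 : ℝ) - r ≠ 0 := ne_of_gt h1r
    have h1xne' : x - 1 ≠ 0 := by intro h; exact h1xne (by linarith)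
    have step1 : ((N : ℝ) * (1 + r) / (r * (1 - x⁻¹))) * HH
        - ((N : ℝ) * x⁻¹ / (1 - x⁻¹)) * S
        + (Real.log (1 - r) / r) * N - r / (1 - r)
        = -(((N : ℝ) * (1 + r) * x / (r * (1 - x))) * HH)
          + ((N : ℝ) * x / (1 - x)) * S
          + ((N : ℝ) * S + (Real.log (1 - r) / r) * N - r / (1 - r)) := by
      field_simp
      ring
    rw [step1, hNS]
    field_simp
    ring
  -- bounds
  have hHH0 : 0 ≤ HH := by
    rw [hHHdef]
    unfold H
    exact Finset.sum_nonneg fun i hi => by positivity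
  have hHHN : HH ≤ (N : ℝ) := by
    calc HH ≤ ∑ i ∈ Finset.Icc 1 (N - 1), (1 : ℝ) := by
          rw [hHHdef]
          unfold H
          apply Finset.sum_le_sum
          intro i hi
          rw [Finset.mem_Icc] at hi
          have h1 : (1 : ℝ) ≤ (i : ℝ) := by exact_mod_cast hi.1
          rw [div_le_one (by linarith)]
          exact h1
      _ = ((N - 1 : ℕ) : ℝ) := by rw [Finset.sum_const, Nat.card_Icc]; simp
      _ ≤ (N : ℝ) := by
          have : N - 1 ≤ N := by omega
          exact_mod_cast this
  have hS2 : |S| ≤ 2 / (1 - r) := by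
    have habs : |S| ≤ ∑ k ∈ Finset.Icc 1 (N - 1), (1 + 1 / r) * r ^ k := by
      rw [hSdef]
      refine (Finset.abs_sum_le_sum_abs _ _).trans (Finset.sum_le_sum ?_)
      intro k hk
      obtain ⟨hk1, hkN⟩ := hk_facts k hk
      have h1 : (0 : ℝ) < (N : ℝ) - k := by linarith
      have hb : |(1 / ((N : ℝ) - k) + 1 / (r * k)) * r ^ k|
          = (1 / ((N : ℝ) - k) + 1 / (r * k)) * r ^ k := by
        apply abs_of_nonneg
        have hk0 : (0 : ℝ) < (k : ℝ) := by linarith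
        positivity
      rw [hb]
      apply mul_le_mul_of_nonneg_right _ (by positivity)
      gcongr
      · rw [div_le_one h1]; linarith
      · exact le_mul_of_one_le_right hr0.le hk1
    calc |S| ≤ ∑ k ∈ Finset.Icc 1 (N - 1), (1 + 1 / r) * r ^ k := habs
      _ = (1 + 1 / r) * ((r - x) / (1 - r)) := by rw [← Finset.mul_sum, hgeom]
      _ = ((1 + 1 / r) * (r - x)) / (1 - r) := by ring
      _ ≤ 2 / (1 - r) := by
          rw [div_le_div_iff_of_pos_right h1r]
          have hrr : (1 + 1 / r) * (r - x) = r + 1 - x - x / r := by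
            field_simp
            ring
          have hxr2 : 0 < x / r := by positivity
          rw [hrr]
          linarith
  have hpow : ∀ m : ℕ, (N : ℝ) ^ m * x ≤ (m.factorial : ℝ) / L ^ m := by
    intro m
    have h := aux_pow_mul_pow_le r hr0 hr1 m N
    rw [← hLdef, ← hxdef] at h
    exact h
  have hN3 : (N : ℝ) ^ 3 * x ≤ 6 / L ^ 3 := by
    have := hpow 3
    norm_num [Nat.factorial] at this
    exact this
  have hN2 : (N : ℝ) ^ 2 * x ≤ 2 / L ^ 2 := by
    have := hpow 2
    norm_num [Nat.factorial] at this
    exact this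
  have hN1 : (N : ℝ) * x ≤ 1 / L := by
    have := hpow 1
    norm_num [Nat.factorial] at this
    rw [one_div]
    exact this
  have b1 : |(((N : ℝ) * (1 + r) * x / (r * (1 - x))) * HH)| * N
      ≤ 12 / (r * (1 - r) * L ^ 3) := by
    have heq : |(((N : ℝ) * (1 + r) * x / (r * (1 - x))) * HH)|
        = ((N : ℝ) * (1 + r) * x / (r * (1 - x))) * HH := by
      apply abs_of_nonneg
      positivity
    rw [heq]
    have hnum : (N : ℝ) * (1 + r) * x * HH * N ≤ 2 * ((N : ℝ) ^ 3 * x) := by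
      have h1 : (1 + r) * HH ≤ 2 * (N : ℝ) := by
        calc (1 + r) * HH ≤ 2 * HH := by
              apply mul_le_mul_of_nonneg_right (by linarith) hHH0
          _ ≤ 2 * N := by linarith
      calc (N : ℝ) * (1 + r) * x * HH * N = (x * ((N : ℝ) * N)) * ((1 + r) * HH) := by ring
        _ ≤ (x * ((N : ℝ) * N)) * (2 * N) := by
            apply mul_le_mul_of_nonneg_left h1 (by positivity)
        _ = 2 * ((N : ℝ) ^ 3 * x) := by ring
    calc ((N : ℝ) * (1 + r) * x / (r * (1 - x))) * HH * N
        = ((N : ℝ) * (1 + r) * x * HH * N) / (r * (1 - x)) := by ring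
      _ ≤ (2 * ((N : ℝ) ^ 3 * x)) / (r * (1 - r)) := by
          apply div_le_div₀ (by positivity) hnum (by positivity)
          nlinarith [hr0, h1rx]
      _ ≤ (2 * (6 / L ^ 3)) / (r * (1 - r)) := by gcongr
      _ = 12 / (r * (1 - r) * L ^ 3) := by
          field_simp
          ring
  have b2 : |((N : ℝ) * x / (1 - x)) * S| * N ≤ 4 / ((1 - r) ^ 2 * L ^ 2) := by
    rw [abs_mul, abs_of_nonneg (show (0:ℝ) ≤ (N : ℝ) * x / (1 - x) by positivity)]
    have h1rne0 : (1 : ℝ) - r ≠ 0 := ne_of_gt h1r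
    calc (N : ℝ) * x / (1 - x) * |S| * N
        ≤ (N : ℝ) * x / (1 - r) * (2 / (1 - r)) * N := by
          gcongr
      _ = ((N : ℝ) ^ 2 * x) * (2 / ((1 - r) * (1 - r))) := by
          field_simp
      _ ≤ (2 / L ^ 2) * (2 / ((1 - r) * (1 - r))) := by
          apply mul_le_mul_of_nonneg_right hN2 (by positivity)
      _ = 4 / ((1 - r) ^ 2 * L ^ 2) := by
          field_simp
          ring
  have b3 : |P3| * N ≤ 4 / ((-Real.log s) ^ 2 * (1 - s)) := by
    have hks : ∀ k : ℕ, (k : ℝ) ^ 2 * s ^ k ≤ 2 / (-Real.log s) ^ 2 := by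
      intro k
      have h := aux_pow_mul_pow_le s hs0 hs1 2 k
      norm_num [Nat.factorial] at h
      rw [show (-Real.log s) ^ 2 = Real.log s ^ 2 by ring]
      exact h
    have hP3nn : 0 ≤ P3 := by
      rw [hP3def]
      apply Finset.sum_nonneg
      intro k hk
      obtain ⟨hk1, hkN⟩ := hk_facts k hk
      apply div_nonneg (by positivity) (by linarith)
    rw [abs_of_nonneg hP3nn, mul_comm]
    calc (N : ℝ) * P3 = ∑ k ∈ Finset.Icc 1 (N - 1), (N : ℝ) * (r ^ k * k / ((N : ℝ) - k)) := by
          rw [hP3def, Finset.mul_sum]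
      _ ≤ ∑ k ∈ Finset.Icc 1 (N - 1), (4 / (-Real.log s) ^ 2) * s ^ k := by
          apply Finset.sum_le_sum
          intro k hk
          obtain ⟨hk1, hkN⟩ := hk_facts k hk
          have hNk : (0 : ℝ) < (N : ℝ) - k := by linarith
          have hNk2 : (N : ℝ) ≤ (1 + k) * ((N : ℝ) - k) := by nlinarith
          have hsk : (0 : ℝ) < s ^ k := pow_pos hs0 k
          have hrk : r ^ k = s ^ k * s ^ k := by rw [← hss, mul_pow]
          have hkk : (k : ℝ) * (1 + k) ≤ 2 * (k : ℝ) ^ 2 := by nlinarith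
          calc (N : ℝ) * (r ^ k * k / ((N : ℝ) - k))
              = r ^ k * k * ((N : ℝ) / ((N : ℝ) - k)) := by ring
            _ ≤ r ^ k * k * (1 + k) := by
                apply mul_le_mul_of_nonneg_left _ (by positivity)
                rw [div_le_iff₀ hNk]
                linarith
            _ ≤ 2 * ((k : ℝ) ^ 2 * s ^ k) * s ^ k := by
                rw [hrk]
                calc s ^ k * s ^ k * k * (1 + k)
                    = (s ^ k * s ^ k) * ((k : ℝ) * (1 + k)) := by ring
                  _ ≤ (s ^ k * s ^ k) * (2 * (k : ℝ) ^ 2) := by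
                      apply mul_le_mul_of_nonneg_left hkk (by positivity)
                  _ = 2 * ((k : ℝ) ^ 2 * s ^ k) * s ^ k := by ring
            _ ≤ 2 * (2 / (-Real.log s) ^ 2) * s ^ k := by
                apply mul_le_mul_of_nonneg_right _ hsk.le
                apply mul_le_mul_of_nonneg_left (hks k) (by norm_num)
            _ = (4 / (-Real.log s) ^ 2) * s ^ k := by ring
      _ = (4 / (-Real.log s) ^ 2) * ∑ k ∈ Finset.Icc 1 (N - 1), s ^ k := by
          rw [← Finset.mul_sum]
      _ ≤ (4 / (-Real.log s) ^ 2) * (1 / (1 - s)) := by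
          apply mul_le_mul_of_nonneg_left _ (by positivity)
          have hsub : Finset.Icc 1 (N - 1) ⊆ Finset.range N := by
            intro k hk
            rw [Finset.mem_Icc] at hk
            rw [Finset.mem_range]
            omega
          calc ∑ k ∈ Finset.Icc 1 (N - 1), s ^ k ≤ ∑ k ∈ Finset.range N, s ^ k :=
                Finset.sum_le_sum_of_subset_of_nonneg hsub
                  (fun k _ _ => (pow_pos hs0 k).le)
            _ = (s ^ N - 1) / (s - 1) := geom_sum_eq (ne_of_lt hs1) N
            _ = (1 - s ^ N) / (1 - s) := by
                rw [div_eq_div_iff (by linarith) (by linarith)]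
                ring
            _ ≤ 1 / (1 - s) := by
                rw [div_le_div_iff_of_pos_right h1s]
                have : 0 ≤ s ^ N := (pow_pos hs0 N).le
                linarith
      _ = 4 / ((-Real.log s) ^ 2 * (1 - s)) := by
          have hLsne : -Real.log s ≠ 0 := ne_of_gt hLs
          have h1sne : (1 : ℝ) - s ≠ 0 := ne_of_gt h1s
          field_simp
  have b4 : |x / (1 - r)| * N ≤ 1 / ((1 - r) * L) := by
    rw [abs_of_nonneg (by positivity : (0:ℝ) ≤ x / (1 - r))]
    calc x / (1 - r) * N = ((N : ℝ) * x) / (1 - r) := by ring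
      _ ≤ (1 / L) / (1 - r) := by gcongr
      _ = 1 / ((1 - r) * L) := by
          rw [div_div]
          ring_nf
  have htail : |G + Real.log (1 - r)| ≤ x / ((N : ℝ) * (1 - r)) := by
    have habsr : |r| < 1 := by rw [abs_of_pos hr0]; exact hr1
    have hf := Real.hasSum_pow_div_log_of_abs_lt_one habsr
    set f : ℕ → ℝ := fun n => r ^ (n + 1) / (n + 1) with hfdef
    have hGf : G = ∑ i ∈ Finset.range (N - 1), f i := by
      rw [hGdef, hIcc, Finset.sum_Ico_eq_sum_range]
      have hcard : N - 1 = N - 1 := rfl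
      apply Finset.sum_congr rfl
      intro i _
      simp only [hfdef]
      rw [show 1 + i = i + 1 by omega]
      push_cast
      ring
    have hsm := hf.summable
    have hkey := Summable.sum_add_tsum_nat_add (f := f) (N - 1) hsm
    have htsum : ∑' i, f i = -Real.log (1 - r) := hf.tsum_eq
    have hGT : G + Real.log (1 - r) = -∑' i, f (i + (N - 1)) := by
      rw [hGf]
      rw [htsum] at hkey
      linarith
    have hsum_shift : Summable fun i => f (i + (N - 1)) :=
      (summable_nat_add_iff (N - 1)).2 hsm
    have hgsm : Summable (fun i : ℕ => x / (N : ℝ) * r ^ i) :=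
      (summable_geometric_of_lt_one hr0.le hr1).mul_left _
    have hbound : ∀ i : ℕ, f (i + (N - 1)) ≤ x / (N : ℝ) * r ^ i := by
      intro i
      have he : i + (N - 1) + 1 = N + i := by omega
      show r ^ (i + (N - 1) + 1) / ((i + (N - 1) : ℕ) + 1 : ℝ) ≤ x / (N : ℝ) * r ^ i
      rw [he, pow_add]
      have hden : (N : ℝ) ≤ ((i + (N - 1) : ℕ) : ℝ) + 1 := by
        have h2 : (N : ℕ) ≤ (i + (N - 1)) + 1 := by omega
        exact_mod_cast h2
      calc r ^ N * r ^ i / (((i + (N - 1) : ℕ) : ℝ) + 1)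
          ≤ r ^ N * r ^ i / (N : ℝ) := by gcongr
        _ = x / (N : ℝ) * r ^ i := by rw [← hxdef]; ring
    have hT_nonneg : 0 ≤ ∑' i, f (i + (N - 1)) := by
      apply tsum_nonneg
      intro i
      show (0:ℝ) ≤ r ^ (i + (N - 1) + 1) / ((i + (N - 1) : ℕ) + 1 : ℝ)
      positivity
    rw [hGT, abs_neg, abs_of_nonneg hT_nonneg]
    calc ∑' i, f (i + (N - 1)) ≤ ∑' i, x / (N : ℝ) * r ^ i :=
          Summable.tsum_le_tsum hbound hsum_shift hgsm
      _ = x / (N : ℝ) * (1 - r)⁻¹ := by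
          rw [tsum_mul_left, tsum_geometric_of_lt_one hr0.le hr1]
      _ = x / ((N : ℝ) * (1 - r)) := by
          rw [← div_eq_mul_inv, div_div]
  have b5 : |((N : ℝ) / r) * (G + Real.log (1 - r))| * N ≤ 1 / (r * (1 - r) * L) := by
    rw [abs_mul, abs_of_nonneg (show (0:ℝ) ≤ (N : ℝ) / r by positivity)]
    have h1rne0 : (1 : ℝ) - r ≠ 0 := ne_of_gt h1r
    have hrne0 : r ≠ 0 := ne_of_gt hr0
    have hNne0 : (N : ℝ) ≠ 0 := ne_of_gt hN0
    calc (N : ℝ) / r * |G + Real.log (1 - r)| * N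
        ≤ (N : ℝ) / r * (x / ((N : ℝ) * (1 - r))) * N := by gcongr
      _ = ((N : ℝ) * x) / (r * (1 - r)) := by
          field_simp
      _ ≤ (1 / L) / (r * (1 - r)) := by gcongr
      _ = 1 / (r * (1 - r) * L) := by
          rw [div_div]
          ring_nf
  rw [hz, hmain, le_div_iff₀ hN0]
  have habs : |-(((N : ℝ) * (1 + r) * x / (r * (1 - x))) * HH)
        + ((N : ℝ) * x / (1 - x)) * S
        + P3 + (-(x / (1 - r))) + ((N : ℝ) / r) * (G + Real.log (1 - r))|
      ≤ |(((N : ℝ) * (1 + r) * x / (r * (1 - x))) * HH)|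
        + |((N : ℝ) * x / (1 - x)) * S| + |P3| + |x / (1 - r)|
        + |((N : ℝ) / r) * (G + Real.log (1 - r))| := by
    calc _ ≤ |-(((N : ℝ) * (1 + r) * x / (r * (1 - x))) * HH)
        + ((N : ℝ) * x / (1 - x)) * S + P3 + (-(x / (1 - r)))|
        + |((N : ℝ) / r) * (G + Real.log (1 - r))| := abs_add_le _ _
      _ ≤ _ := by
        gcongr
        calc _ ≤ |-(((N : ℝ) * (1 + r) * x / (r * (1 - x))) * HH)
            + ((N : ℝ) * x / (1 - x)) * S + P3| + |(-(x / (1 - r)))| := abs_add_le _ _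
          _ ≤ _ := by
            rw [abs_neg]
            gcongr
            calc _ ≤ |-(((N : ℝ) * (1 + r) * x / (r * (1 - x))) * HH)
                + ((N : ℝ) * x / (1 - x)) * S| + |P3| := abs_add_le _ _
              _ ≤ _ := by
                gcongr
                calc _ ≤ |-(((N : ℝ) * (1 + r) * x / (r * (1 - x))) * HH)|
                    + |((N : ℝ) * x / (1 - x)) * S| := abs_add_le _ _
                  _ ≤ _ := by rw [abs_neg]
  calc _ ≤ (|(((N : ℝ) * (1 + r) * x / (r * (1 - x))) * HH)|
        + |((N : ℝ) * x / (1 - x)) * S| + |P3| + |x / (1 - r)|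
        + |((N : ℝ) / r) * (G + Real.log (1 - r))|) * N := by
        apply mul_le_mul_of_nonneg_right habs hN0.le
    _ ≤ _ := by
        simp only [add_mul]
        linarith [b1, b2, b3, b4, b5]
end
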